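/- If the initial quantile function satisfies X(z₂,0) - X(z₁,0) ≥ (bλ/(Lip(v)Lip(U)))(z₂-z₁) for all z₁ < z₂ (equivalently ‖ρ₀‖_{L^∞} ≤ Lip(v)Lip(U)/(bλ)), then the solution of the quantile equation satisfies X(z₂,t) - X(z₁,t) ≥ (bλ/(Lip(v)Lip(U)))(z₂-z₁) for all t ≥ 0, so ‖ρ(·,t)‖_{L^∞} ≤ Lip(v)Lip(U)/(bλ) for all t. -/

import Mathlib

open MeasureTheory
open scoped ENNReal

/-- Threshold `L^∞` bound: if the initial quantile function satisfies
`X(z₂,0) - X(z₁,0) ≥ (bλ/(Lip(v)Lip(U)))(z₂ - z₁)` for all `z₁ < z₂` (i.e.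
`‖ρ₀‖_{L^∞} ≤ Lip(v)Lip(U)/(bλ)`), then the same lower slope bound holds for all `t ≥ 0`,
so `‖ρ(·,t)‖_{L^∞} ≤ Lip(v)Lip(U)/(bλ)` for all `t`. -/
theorem stmt_11 (Lv LU lam b : ℝ) (hLv : 0 < Lv) (hLU : 0 < LU) (hlam : 0 < lam) (hb : 0 < b)
    (v U : ℝ → ℝ)
    (hv : ∀ a b' : ℝ, |v a - v b'| ≤ Lv * |a - b'|)
    (hU : ∀ a b' : ℝ, |U a - U b'| ≤ LU * |a - b'|)
    (hvdec : ∀ r₁ r₂ : ℝ, r₁ ≤ r₂ → v r₂ - v r₁ ≤ -b * (r₂ - r₁))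
    (X : ℝ → ℝ → ℝ) (hXmeas : ∀ t : ℝ, Measurable (fun z => X z t))
    (hode : ∀ z ∈ Set.Icc (0:ℝ) 1, ∀ t, 0 ≤ t →
      HasDerivAt (X z) (v ((∫ ζ in (0:ℝ)..1, U (X z t - X ζ t)) - lam * z)) t)
    (hinit : ∀ z₁ z₂ : ℝ, 0 ≤ z₁ → z₁ < z₂ → z₂ ≤ 1 →
      b * lam / (Lv * LU) * (z₂ - z₁) ≤ X z₂ 0 - X z₁ 0) :
    (∀ t, 0 ≤ t → ∀ z₁ z₂ : ℝ, 0 ≤ z₁ → z₁ < z₂ → z₂ ≤ 1 →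
        b * lam / (Lv * LU) * (z₂ - z₁) ≤ X z₂ t - X z₁ t) ∧
    (∀ t, 0 ≤ t → ∀ A : Set ℝ, MeasurableSet A →
        Measure.map (fun z => X z t) (volume.restrict (Set.Icc (0:ℝ) 1)) A ≤
          ENNReal.ofReal (Lv * LU / (b * lam)) * volume A) := by
  set c : ℝ := b * lam / (Lv * LU) with hc
  have hcpos : 0 < c := by positivity
  -- `b ≤ Lv`
  have hbLv : b ≤ Lv := by
    have h1 := hvdec 0 1 zero_le_one
    have h2 := hv 1 0
    rw [show |(1:ℝ) - 0| = 1 by norm_num, mul_one] at h2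
    have h3 := neg_le_abs (v 1 - v 0)
    nlinarith [abs_nonneg (v 1 - v 0)]
  -- `U` is continuous, hence our integrands are measurable
  have hUcont : Continuous U := by
    apply LipschitzWith.continuous (K := Real.toNNReal LU)
    apply LipschitzWith.of_dist_le_mul
    intro x y
    rw [Real.dist_eq, Real.dist_eq, Real.coe_toNNReal LU hLU.le]
    exact hU x y
  -- key integral estimate
  have key : ∀ t z₁ z₂ : ℝ,
      |(∫ ζ in (0:ℝ)..1, U (X z₂ t - X ζ t)) - (∫ ζ in (0:ℝ)..1, U (X z₁ t - X ζ t))|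
        ≤ LU * |X z₂ t - X z₁ t| := by
    intro t z₁ z₂
    have hmeas : ∀ z : ℝ, Measurable (fun ζ => U (X z t - X ζ t)) := fun z =>
      hUcont.measurable.comp (measurable_const.sub (hXmeas t))
    have hdb : ∀ ζ : ℝ, ‖U (X z₂ t - X ζ t) - U (X z₁ t - X ζ t)‖
        ≤ LU * |X z₂ t - X z₁ t| := by
      intro ζ
      have := hU (X z₂ t - X ζ t) (X z₁ t - X ζ t)
      rwa [sub_sub_sub_cancel_right] at this
    have hd : IntervalIntegrable
        (fun ζ => U (X z₂ t - X ζ t) - U (X z₁ t - X ζ t)) volume 0 1 := by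
      rw [intervalIntegrable_iff_integrableOn_Ioc_of_le zero_le_one]
      have hconst : IntegrableOn (fun _ : ℝ => LU * |X z₂ t - X z₁ t|)
          (Set.Ioc (0:ℝ) 1) volume := integrableOn_const (by simp) enorm_ne_top
      exact hconst.mono' ((hmeas z₂).sub (hmeas z₁)).aestronglyMeasurable
        (Filter.Eventually.of_forall fun ζ => hdb ζ)
    by_cases h₁ : IntervalIntegrable (fun ζ => U (X z₁ t - X ζ t)) volume 0 1
    · have h₂ : IntervalIntegrable (fun ζ => U (X z₂ t - X ζ t)) volume 0 1 := by
        have : (fun ζ => U (X z₂ t - X ζ t)) = fun ζ =>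
            U (X z₁ t - X ζ t) + (U (X z₂ t - X ζ t) - U (X z₁ t - X ζ t)) := by
          funext ζ; ring
        rw [this]; exact h₁.add hd
      rw [← intervalIntegral.integral_sub h₂ h₁]
      have := intervalIntegral.norm_integral_le_of_norm_le_const
        (C := LU * |X z₂ t - X z₁ t|) (f := fun ζ => U (X z₂ t - X ζ t) - U (X z₁ t - X ζ t))
        (a := 0) (b := 1) (fun x _ => hdb x)
      simpa using this
    · have h₂ : ¬ IntervalIntegrable (fun ζ => U (X z₂ t - X ζ t)) volume 0 1 := by
        intro h₂
        apply h₁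
        have : (fun ζ => U (X z₁ t - X ζ t)) = fun ζ =>
            U (X z₂ t - X ζ t) - (U (X z₂ t - X ζ t) - U (X z₁ t - X ζ t)) := by
          funext ζ; ring
        rw [this]; exact h₂.sub hd
      rw [intervalIntegral.integral_undef h₁, intervalIntegral.integral_undef h₂]
      simp; positivity
  -- Part 1
  have part1 : ∀ t, 0 ≤ t → ∀ z₁ z₂ : ℝ, 0 ≤ z₁ → z₁ < z₂ → z₂ ≤ 1 →
      c * (z₂ - z₁) ≤ X z₂ t - X z₁ t := by
    intro t₀ ht₀ z₁ z₂ hz₁ hz hz₂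
    by_contra hcon
    push_neg at hcon
    have hz₁' : z₁ ∈ Set.Icc (0:ℝ) 1 := ⟨hz₁, hz.le.trans hz₂⟩
    have hz₂' : z₂ ∈ Set.Icc (0:ℝ) 1 := ⟨hz₁.trans hz.le, hz₂⟩
    set Δ : ℝ := z₂ - z₁ with hΔ
    have hΔpos : 0 < Δ := sub_pos.2 hz
    set g : ℝ → ℝ := fun t => c * Δ - (X z₂ t - X z₁ t) with hg
    set ρ : ℝ → ℝ → ℝ := fun z t => (∫ ζ in (0:ℝ)..1, U (X z t - X ζ t)) - lam * z with hρ
    have hgderiv : ∀ t, 0 ≤ t → HasDerivAt g (v (ρ z₁ t) - v (ρ z₂ t)) t := by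
      intro t ht
      have h2 := hode z₂ hz₂' t ht
      have h1 := hode z₁ hz₁' t ht
      have := (hasDerivAt_const t (c * Δ)).sub (h2.sub h1)
      exact this.congr_deriv (by simp only [hρ]; ring)
    have hg0 : g 0 ≤ 0 := by
      have h := hinit z₁ z₂ hz₁ hz hz₂
      show c * Δ - (X z₂ 0 - X z₁ 0) ≤ 0
      rw [hΔ]; linarith
    have hgt₀ : 0 < g t₀ := by
      show 0 < c * Δ - (X z₂ t₀ - X z₁ t₀); linarith
    -- first crossing time
    set s : Set ℝ := {τ | τ ∈ Set.Icc 0 t₀ ∧ g τ ≤ 0} with hs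
    have hsne : s.Nonempty := ⟨0, ⟨le_refl 0, ht₀⟩, hg0⟩
    have hsbdd : BddAbove s := ⟨t₀, fun τ hτ => hτ.1.2⟩
    have hgcont : ∀ τ, 0 ≤ τ → ContinuousAt g τ := fun τ hτ =>
      (hgderiv τ hτ).continuousAt
    have hsclosed : IsClosed s := by
      have : s = Set.Icc 0 t₀ ∩ g ⁻¹' Set.Iic 0 := rfl
      rw [this]
      apply ContinuousOn.preimage_isClosed_of_isClosed _ isClosed_Icc isClosed_Iic
      exact fun τ hτ => (hgcont τ hτ.1).continuousWithinAt
    set t₁ : ℝ := sSup s with ht₁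
    have ht₁s : t₁ ∈ s := hsclosed.csSup_mem hsne hsbdd
    have ht₁0 : 0 ≤ t₁ := ht₁s.1.1
    have ht₁lt : t₁ < t₀ := lt_of_le_of_ne ht₁s.1.2 (by
      intro h; rw [h] at ht₁s; linarith [ht₁s.2])
    have hpos : ∀ τ, t₁ < τ → τ ≤ t₀ → 0 < g τ := by
      intro τ h₁ h₂
      by_contra h
      push_neg at h
      have : τ ∈ s := ⟨⟨ht₁0.trans h₁.le, h₂⟩, h⟩
      exact absurd (le_csSup hsbdd this) (not_le.2 h₁)
    -- g t₁ = 0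
    have hgt₁ : g t₁ = 0 := by
      rcases lt_or_eq_of_le ht₁s.2 with hlt | heq
      · exfalso
        have hev : ∀ᶠ τ in nhds t₁, g τ < 0 :=
          (hgcont t₁ ht₁0).eventually_lt_const hlt
        have hmem : Set.Ioc t₁ t₀ ∈ nhdsWithin t₁ (Set.Ioi t₁) :=
          Ioc_mem_nhdsGT_of_mem ⟨le_refl t₁, ht₁lt⟩
        obtain ⟨τ, hτ1, hτ2⟩ :=
          ((hev.filter_mono nhdsWithin_le_nhds).and hmem).exists
        exact absurd (hpos τ hτ2.1 hτ2.2) (not_lt.2 hτ1.le)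
      · exact heq
    -- Gronwall bound on [t₁, t₀]
    have hcont : ContinuousOn g (Set.Icc t₁ t₀) := fun τ hτ =>
      (hgcont τ (ht₁0.trans hτ.1)).continuousWithinAt
    have hf' : ∀ x ∈ Set.Ico t₁ t₀, ∀ r, (v (ρ z₁ x) - v (ρ z₂ x)) < r →
        ∃ᶠ z in nhdsWithin x (Set.Ioi x), (z - x)⁻¹ * (g z - g x) < r := by
      intro x hx r hr
      have := ((hgderiv x (ht₁0.trans hx.1)).hasDerivWithinAt
        (s := Set.Ici x)).liminf_right_slope_le hr
      apply this.mono
      intro z hz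
      rwa [slope_def_field, div_eq_inv_mul] at hz
    have hbound : ∀ x ∈ Set.Ico t₁ t₀,
        v (ρ z₁ x) - v (ρ z₂ x) ≤ (Lv * LU) * g x + 0 := by
      intro τ hτ
      have hτ0 : 0 ≤ τ := ht₁0.trans hτ.1
      have hgτ : 0 ≤ g τ := by
        rcases eq_or_lt_of_le hτ.1 with h | h
        · rw [← h, hgt₁]
        · exact (hpos τ h hτ.2.le).le
      rcases le_or_gt (ρ z₂ τ) (ρ z₁ τ) with hρle | hρlt
      · have h1 := hvdec (ρ z₂ τ) (ρ z₁ τ) hρle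
        nlinarith [mul_nonneg (mul_nonneg hLv.le hLU.le) hgτ,
          mul_nonneg hb.le (sub_nonneg.2 hρle)]
      · have hY : |X z₂ τ - X z₁ τ| ≤ c * Δ + g τ := by
          have : X z₂ τ - X z₁ τ = c * Δ - g τ := by simp [hg]
          rw [this]
          calc |c * Δ - g τ| ≤ |c * Δ| + |g τ| := abs_sub _ _
            _ = c * Δ + g τ := by
                rw [abs_of_nonneg (by positivity), abs_of_nonneg hgτ]
        have e1 : ρ z₂ τ - ρ z₁ τ ≤ LU * (c * Δ + g τ) - lam * Δ := by
          have h1 : ρ z₂ τ - ρ z₁ τ =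
              ((∫ ζ in (0:ℝ)..1, U (X z₂ τ - X ζ τ))
                - (∫ ζ in (0:ℝ)..1, U (X z₁ τ - X ζ τ))) - lam * Δ := by
            simp [hρ, hΔ]; ring
          have h2 := (le_abs_self _).trans (key τ z₁ z₂)
          have h3 : LU * |X z₂ τ - X z₁ τ| ≤ LU * (c * Δ + g τ) :=
            mul_le_mul_of_nonneg_left hY hLU.le
          linarith
        have e2 : v (ρ z₁ τ) - v (ρ z₂ τ) ≤ Lv * (ρ z₂ τ - ρ z₁ τ) := by
          have h := (le_abs_self _).trans (hv (ρ z₁ τ) (ρ z₂ τ))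
          rwa [abs_sub_comm, abs_of_pos (sub_pos.2 hρlt)] at h
        have e3 : Lv * (ρ z₂ τ - ρ z₁ τ) ≤ Lv * (LU * (c * Δ + g τ) - lam * Δ) :=
          mul_le_mul_of_nonneg_left e1 hLv.le
        have e5 : Lv * (LU * (c * Δ + g τ) - lam * Δ)
            = b * lam * Δ + Lv * LU * g τ - Lv * lam * Δ := by
          rw [hc]; field_simp
        nlinarith [mul_le_mul_of_nonneg_right
          (mul_le_mul_of_nonneg_right hbLv hlam.le) hΔpos.le]
    have := le_gronwallBound_of_liminf_deriv_right_le hcont hf' (le_of_eq hgt₁) hbound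
      t₀ ⟨ht₁lt.le, le_refl t₀⟩
    rw [gronwallBound_ε0_δ0] at this
    linarith
  refine ⟨part1, ?_⟩
  -- Part 2
  intro t ht A hA
  set f : ℝ → ℝ := fun z => X z t with hf
  have hexp : ∀ z₁ ∈ Set.Icc (0:ℝ) 1, ∀ z₂ ∈ Set.Icc (0:ℝ) 1,
      c * |z₂ - z₁| ≤ |f z₂ - f z₁| := by
    intro z₁ h₁ z₂ h₂
    show c * |z₂ - z₁| ≤ |X z₂ t - X z₁ t|
    rcases lt_trichotomy z₁ z₂ with h | h | h
    · have := part1 t ht z₁ z₂ h₁.1 h h₂.2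
      rw [abs_of_pos (sub_pos.2 h)]
      exact this.trans (le_abs_self _)
    · simp [h]
    · have := part1 t ht z₂ z₁ h₂.1 h h₁.2
      rw [abs_sub_comm, abs_of_pos (sub_pos.2 h), abs_sub_comm]
      exact this.trans (le_abs_self _)
  set S : Set ℝ := f ⁻¹' A ∩ Set.Icc (0:ℝ) 1 with hS
  have hmap : Measure.map f (volume.restrict (Set.Icc (0:ℝ) 1)) A = volume S := by
    rw [Measure.map_apply (hXmeas t) hA, Measure.restrict_apply ((hXmeas t) hA)]
  have hinj : Set.InjOn f S := by
    intro a ha a' ha' hEq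
    have h := hexp a ha.2 a' ha'.2
    rw [← hEq, sub_self, abs_zero] at h
    have : |a' - a| ≤ 0 := by
      by_contra hcon
      push_neg at hcon
      nlinarith
    have : a' - a = 0 := abs_eq_zero.1 (le_antisymm this (abs_nonneg _))
    linarith
  set K : NNReal := Real.toNNReal c⁻¹ with hK
  have hKc : (K : ℝ) = c⁻¹ := Real.coe_toNNReal _ (inv_nonneg.2 hcpos.le)
  have hgl : LipschitzOnWith K (Function.invFunOn f S) (f '' S) := by
    apply LipschitzOnWith.of_dist_le_mul
    intro x hx y hy
    have hxm : Function.invFunOn f S x ∈ S := Function.invFunOn_mem (by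
      obtain ⟨a, ha, rfl⟩ := hx; exact ⟨a, ha, rfl⟩)
    have hym : Function.invFunOn f S y ∈ S := Function.invFunOn_mem (by
      obtain ⟨a, ha, rfl⟩ := hy; exact ⟨a, ha, rfl⟩)
    have hxf : f (Function.invFunOn f S x) = x := Function.invFunOn_eq (by
      obtain ⟨a, ha, rfl⟩ := hx; exact ⟨a, ha, rfl⟩)
    have hyf : f (Function.invFunOn f S y) = y := Function.invFunOn_eq (by
      obtain ⟨a, ha, rfl⟩ := hy; exact ⟨a, ha, rfl⟩)
    have h := hexp _ hxm.2 _ hym.2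
    rw [hyf, hxf] at h
    rw [Real.dist_eq, Real.dist_eq, hKc, inv_mul_eq_div, le_div_iff₀ hcpos]
    rw [abs_sub_comm y x] at h
    rw [abs_sub_comm]
    linarith
  have hS_eq : Function.invFunOn f S '' (f '' S) = S :=
    hinj.invFunOn_image Set.Subset.rfl
  have h1 : volume S ≤ (K : ℝ≥0∞) * volume (f '' S) := by
    calc volume S = μH[1] S := by rw [MeasureTheory.hausdorffMeasure_real]
      _ = μH[1] (Function.invFunOn f S '' (f '' S)) := by rw [hS_eq]
      _ ≤ (K : ℝ≥0∞) ^ (1:ℝ) * μH[1] (f '' S) :=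
          hgl.hausdorffMeasure_image_le zero_le_one
      _ = (K : ℝ≥0∞) * volume (f '' S) := by
          rw [ENNReal.rpow_one, MeasureTheory.hausdorffMeasure_real]
  have h2 : volume (f '' S) ≤ volume A := by
    apply measure_mono
    calc f '' S ⊆ f '' (f ⁻¹' A) := Set.image_mono Set.inter_subset_left
      _ ⊆ A := Set.image_preimage_subset f A
  have hKof : (K : ℝ≥0∞) = ENNReal.ofReal (Lv * LU / (b * lam)) := by
    have : c⁻¹ = Lv * LU / (b * lam) := by rw [hc, inv_div]
    rw [hK, this]; rfl
  rw [hmap, ← hKof]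
  calc volume S ≤ (K : ℝ≥0∞) * volume (f '' S) := h1
    _ ≤ (K : ℝ≥0∞) * volume A := mul_le_mul_right h2 _
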